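/- If G is a connected K_{1,r}-free graph with minimum degree at least r, where r ≥ 3, then G has the strong parity property. -/

import Mathlib

open SimpleGraph

/-- The degree of `v` in `H`, defined as the cardinality of its neighbor set. -/
noncomputable def edeg {V : Type*} (H : SimpleGraph V) (v : V) : ℕ := (H.neighborSet v).ncard

/-- A factor of `G`: a spanning subgraph with all degrees at least 1. -/
def IsFactor {V : Type*} (G H : SimpleGraph V) : Prop :=
  H ≤ G ∧ ∀ v, 1 ≤ edeg H v

/-- An `X`-parity-factor of `G`: a factor whose odd-degree vertices are exactly `X`. -/
def IsParityFactor {V : Type*} (G H : SimpleGraph V) (X : Set V) : Prop :=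
  IsFactor G H ∧ ∀ v, (Odd (edeg H v) ↔ v ∈ X)

/-- `G` has the strong parity property if every even-sized vertex subset
admits an `X`-parity-factor. -/
def StrongParity {V : Type*} (G : SimpleGraph V) : Prop :=
  ∀ X : Set V, Even X.ncard → ∃ H, IsParityFactor G H X

-- Auxiliary lemmas

lemma finset_card_symmDiff {V : Type*} [DecidableEq V] (A B : Finset V) :
    (symmDiff A B).card + 2 * (A ∩ B).card = A.card + B.card := by
  rw [symmDiff_def]
  have hd : Disjoint (A \ B) (B \ A) := by
    simp [Finset.disjoint_left]; tauto
  rw [Finset.sup_eq_union, Finset.card_union_of_disjoint hd]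
  have e1 : A \ B = A \ (A ∩ B) := by ext x; simp
  have e2 : B \ A = B \ (A ∩ B) := by ext x; simp
  have h1 := Finset.card_sdiff_add_card_eq_card (Finset.inter_subset_left (s₁ := A) (s₂ := B))
  have h2 := Finset.card_sdiff_add_card_eq_card (Finset.inter_subset_right (s₁ := A) (s₂ := B))
  rw [e1, e2]
  omega

lemma ncard_symmDiff_parity {V : Type*} (A B : Set V) (hA : A.Finite) (hB : B.Finite) :
    (symmDiff A B).ncard % 2 = (A.ncard + B.ncard) % 2 := by
  classical
  lift A to Finset V using hA
  lift B to Finset V using hB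
  have h1 : symmDiff (A : Set V) (B : Set V) = ((symmDiff A B : Finset V) : Set V) := by
    ext x; simp [Set.mem_symmDiff, Finset.mem_symmDiff]
  rw [h1]
  simp only [Set.ncard_coe_finset]
  have := finset_card_symmDiff A B
  omega


lemma neighborSet_symmDiff {V : Type*} (H P : SimpleGraph V) (v : V) :
    (symmDiff H P).neighborSet v = symmDiff (H.neighborSet v) (P.neighborSet v) := by
  ext x
  simp only [mem_neighborSet, Set.mem_symmDiff, symmDiff_def]
  simp [sup_adj, sdiff_adj]

lemma edeg_symmDiff_parity {V : Type*} [Fintype V] (H P : SimpleGraph V) (v : V) :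
    edeg (symmDiff H P) v % 2 = (edeg H v + edeg P v) % 2 := by
  unfold edeg
  rw [neighborSet_symmDiff]
  exact ncard_symmDiff_parity _ _ (Set.toFinite _) (Set.toFinite _)

/-- the single-edge graph on `{a,b}` -/
def pairG {V : Type*} (a b : V) : SimpleGraph V where
  Adj x y := x ≠ y ∧ ((x = a ∧ y = b) ∨ (x = b ∧ y = a))
  symm := by constructor; intro x y ⟨h1, h2⟩; exact ⟨Ne.symm h1, by tauto⟩
  loopless := by constructor; intro x ⟨h1, _⟩; exact h1 rfl

open scoped Classical in
lemma pairG_neighborSet {V : Type*} {a b : V} (hab : a ≠ b) (x : V) :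
    (pairG a b).neighborSet x = if x = a then {b} else if x = b then {a} else ∅ := by
  ext y
  simp only [mem_neighborSet, pairG]
  split_ifs with h1 h2 <;> subst_vars <;> simp_all <;> tauto

open scoped Classical in
lemma edeg_pairG {V : Type*} {a b : V} (hab : a ≠ b) (x : V) :
    edeg (pairG a b) x = if x = a ∨ x = b then 1 else 0 := by
  unfold edeg
  rw [pairG_neighborSet hab]
  split_ifs with h1 h2 h3 <;> simp_all

def Realz {V : Type*} (G : SimpleGraph V) (X : Set V) : Prop :=
  ∃ H, H ≤ G ∧ ∀ v, (Odd (edeg H v) ↔ v ∈ X)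

lemma pairG_le {V : Type*} {G : SimpleGraph V} {a b : V} (hab : G.Adj a b) :
    pairG a b ≤ G := by
  intro x y ⟨h1, h2⟩
  rcases h2 with ⟨rfl, rfl⟩ | ⟨rfl, rfl⟩
  · exact hab
  · exact hab.symm

lemma realz_toggle {V : Type*} [Fintype V] {G : SimpleGraph V} {X : Set V} {a b : V}
    (hab : G.Adj a b) (hX : Realz G X) : Realz G (symmDiff X {a, b}) := by
  obtain ⟨H, hHG, hH⟩ := hX
  refine ⟨symmDiff H (pairG a b), ?_, ?_⟩
  · exact (symmDiff_le_sup (a := H) (b := pairG a b)).trans (sup_le hHG (pairG_le hab))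
  · intro v
    have hp := edeg_symmDiff_parity H (pairG a b) v
    have hd := edeg_pairG hab.ne v
    have hv := hH v
    rw [Nat.odd_iff] at *
    constructor
    · intro h
      rw [Set.mem_symmDiff]
      by_cases hva : v = a ∨ v = b
      · rw [if_pos hva] at hd
        right
        constructor
        · rcases hva with rfl | rfl <;> simp
        · intro hvX
          rw [← hv] at hvX
          omega
      · rw [if_neg hva] at hd
        left
        refine ⟨?_, ?_⟩
        · rw [← hv]; omega
        · simp only [Set.mem_insert_iff, Set.mem_singleton_iff]; tauto
    · intro h
      rw [Set.mem_symmDiff] at h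
      rcases h with ⟨h1, h2⟩ | ⟨h1, h2⟩
      · have hva : ¬ (v = a ∨ v = b) := by
          simp only [Set.mem_insert_iff, Set.mem_singleton_iff] at h2; tauto
        rw [if_neg hva] at hd
        rw [← hv] at h1
        omega
      · have hva : v = a ∨ v = b := by
          simpa using h1
        rw [if_pos hva] at hd
        rw [← hv] at h2
        omega

lemma realz_walk {V : Type*} [Fintype V] {G : SimpleGraph V} {a b : V}
    (p : G.Walk a b) : ∀ (X : Set V), a ≠ b → Realz G X → Realz G (symmDiff X {a, b}) := by
  induction p with
  | nil => intro X hab hX; exact absurd rfl hab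
  | @cons a c b h q ih =>
    intro X hab hX
    by_cases hcb : c = b
    · subst hcb
      exact realz_toggle h hX
    · have h1 : Realz G (symmDiff X {a, c}) := realz_toggle h hX
      have h2 := ih (symmDiff X {a, c}) hcb h1
      have h3 : symmDiff (symmDiff X {a, c}) {c, b} = symmDiff X {a, b} := by
        rw [symmDiff_assoc]
        congr 1
        ext x
        have hac : a ≠ c := h.ne
        simp only [Set.mem_symmDiff, Set.mem_insert_iff, Set.mem_singleton_iff]
        constructor
        · rintro (⟨h1, h2⟩ | ⟨h1, h2⟩) <;> rcases h1 with rfl | rfl <;> tauto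
        · rintro (rfl | rfl) <;> tauto
      rwa [h3] at h2

lemma realz_pair {V : Type*} [Fintype V] {G : SimpleGraph V} (hG : G.Connected)
    {a b : V} (hab : a ≠ b) {X : Set V} (hX : Realz G X) : Realz G (symmDiff X {a, b}) := by
  obtain ⟨p⟩ := hG.preconnected a b
  exact realz_walk p X hab hX

lemma realz_of_even {V : Type*} [Fintype V] {G : SimpleGraph V} (hG : G.Connected)
    (X : Set V) (hX : Even X.ncard) : Realz G X := by
  classical
  generalize hn : X.ncard = n at hX
  induction n using Nat.strong_induction_on generalizing X with
  | _ n ih =>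
    rcases Nat.eq_zero_or_pos n with rfl | hpos
    · have hXe : X = ∅ := (Set.ncard_eq_zero (Set.toFinite X)).mp hn
      subst hXe
      refine ⟨⊥, bot_le, fun v => ?_⟩
      have hb : (⊥ : SimpleGraph V).neighborSet v = ∅ := by ext x; simp
      simp [edeg, hb]
    · have h2 : 2 ≤ n := by
        rcases hX with ⟨k, hk⟩; omega
      have h2' : 1 < X.ncard := by omega
      obtain ⟨a, ha, b, hb, hab⟩ := (Set.one_lt_ncard (Set.toFinite X)).mp h2'
      have hsub : ({a, b} : Set V) ⊆ X := by
        intro x hx; rcases hx with rfl | rfl; exact ha; exact hb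
      have hXeq : X = symmDiff (X \ {a, b}) {a, b} := by
        ext x
        simp only [Set.mem_symmDiff, Set.mem_diff, Set.mem_insert_iff, Set.mem_singleton_iff]
        by_cases hx : x = a ∨ x = b
        · rcases hx with rfl | rfl <;> simp_all
        · push_neg at hx; simp_all
      have hcard : (X \ {a, b}).ncard = n - 2 := by
        rw [Set.ncard_diff hsub, hn]
        have : ({a, b} : Set V).ncard = 2 := Set.ncard_pair hab
        omega
      have hrec : Realz G (X \ {a, b}) := by
        apply ih (n - 2) (by omega) _ hcard
        rcases hX with ⟨k, hk⟩
        exact ⟨k - 1, by omega⟩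
      rw [hXeq]
      exact realz_pair hG hab hrec

lemma claw_neighbors {V : Type*} [Fintype V] (G : SimpleGraph V) (r : ℕ)
    (hfree : IsEmpty (completeBipartiteGraph (Fin 1) (Fin r) ↪g G))
    (hδ : ∀ v, r ≤ edeg G v) (v : V) :
    ∃ u w, G.Adj v u ∧ G.Adj v w ∧ u ≠ w ∧ G.Adj u w := by
  classical
  by_contra hcon
  push_neg at hcon
  obtain ⟨t, hts, htc⟩ := Set.exists_subset_card_eq (s := G.neighborSet v) (hδ v)
  have htf : t.Finite := Set.Finite.subset (Set.toFinite _) hts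
  have htc' : htf.toFinset.card = r := by
    rw [← Set.ncard_eq_toFinset_card t htf]; exact htc
  let e := htf.toFinset.equivFinOfCardEq htc'
  have hmem : ∀ i : Fin r, (e.symm i : V) ∈ G.neighborSet v :=
    fun i => hts (htf.mem_toFinset.mp (e.symm i).2)
  have hne : ∀ i : Fin r, (e.symm i : V) ≠ v := by
    intro i h
    have := hmem i
    rw [h] at this
    exact G.irrefl this
  refine hfree.elim ⟨⟨Sum.elim (fun _ => v) (fun i => (e.symm i : V)), ?_⟩, ?_⟩
  · rintro (x | x) (y | y) h <;> simp only [Sum.elim_inl, Sum.elim_inr] at h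
    · simp [Subsingleton.elim x y]
    · exact absurd h.symm (hne y)
    · exact absurd h (hne x)
    · have := e.symm.injective (Subtype.ext h)
      rw [this]
  · rintro (x | x) (y | y) <;>
      simp only [RelEmbedding.coe_mk, Function.Embedding.coeFn_mk, Sum.elim_inl, Sum.elim_inr,
        completeBipartiteGraph, Sum.isLeft_inl, Sum.isRight_inr, Sum.isRight_inl, Sum.isLeft_inr]
    · exact iff_of_false G.irrefl (by simp)
    · exact iff_of_true (hmem y) (by simp)
    · exact iff_of_true (hmem x).symm (by simp)
    · simp only [Bool.false_eq_true, and_false, false_and, or_self, iff_false]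
      intro hadj
      by_cases hxy : x = y
      · subst hxy; exact G.irrefl hadj
      · have hne2 : (e.symm x : V) ≠ (e.symm y : V) := by
          intro h; exact hxy (e.symm.injective.eq_iff.mp (Subtype.ext h) ▸ rfl)
        exact hcon _ _ (hmem x) (hmem y) hne2 hadj

lemma neighborSet_sup' {V : Type*} (A B : SimpleGraph V) (x : V) :
    (A ⊔ B).neighborSet x = A.neighborSet x ∪ B.neighborSet x := by
  ext y; simp [mem_neighborSet, sup_adj]

lemma deisolate {V : Type*} [Fintype V] {G : SimpleGraph V} (r : ℕ)
    (hfree : IsEmpty (completeBipartiteGraph (Fin 1) (Fin r) ↪g G))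
    (hδ : ∀ v, r ≤ edeg G v) :
    ∀ n : ℕ, ∀ X : Set V, ∀ H : SimpleGraph V, H ≤ G →
      (∀ v, Odd (edeg H v) ↔ v ∈ X) → {v | edeg H v = 0}.ncard ≤ n →
      ∃ H', H' ≤ G ∧ (∀ v, 1 ≤ edeg H' v) ∧ (∀ v, Odd (edeg H' v) ↔ v ∈ X) := by
  intro n
  induction n with
  | zero =>
    intro X H hHG hpar hiso
    refine ⟨H, hHG, fun v => ?_, hpar⟩
    by_contra h
    have h0 : edeg H v = 0 := by omega
    have : ({v | edeg H v = 0} : Set V).ncard = 0 := le_antisymm hiso (Nat.zero_le _)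
    rw [Set.ncard_eq_zero (Set.toFinite _)] at this
    exact absurd h0 (by rw [Set.eq_empty_iff_forall_notMem] at this; exact this v)
  | succ m ih =>
    intro X H hHG hpar hiso
    rcases Set.eq_empty_or_nonempty {v | edeg H v = 0} with hemp | ⟨v, hv⟩
    · refine ⟨H, hHG, fun v => ?_, hpar⟩
      by_contra h
      have h0 : edeg H v = 0 := by omega
      exact absurd h0 (by rw [Set.eq_empty_iff_forall_notMem] at hemp; exact hemp v)
    · simp only [Set.mem_setOf_eq] at hv
      have hNv : H.neighborSet v = ∅ := by
        rw [← Set.ncard_eq_zero (Set.toFinite _)]; exact hv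
      obtain ⟨u, w, hvu, hvw, huw, hadjuw⟩ := claw_neighbors G r hfree hδ v
      have hvu' : v ≠ u := hvu.ne
      have hvw' : v ≠ w := hvw.ne
      set T : SimpleGraph V := pairG v u ⊔ pairG v w ⊔ pairG u w with hT
      have hTG : T ≤ G := sup_le (sup_le (pairG_le hvu) (pairG_le hvw)) (pairG_le hadjuw)
      have hTv : T.neighborSet v = {u, w} := by
        ext y
        simp only [hT, neighborSet_sup', Set.mem_union, mem_neighborSet, pairG,
          Set.mem_insert_iff, Set.mem_singleton_iff]
        constructor
        · rintro ((⟨h1, h2⟩ | ⟨h1, h2⟩) | ⟨h1, h2⟩) <;> rcases h2 with ⟨he1, he2⟩ | ⟨he1, he2⟩ <;>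
            subst he2 <;> simp_all
        · rintro (rfl | rfl) <;> simp [hvu', hvw', huw, hvu'.symm, hvw'.symm, huw.symm]
      have hTu : T.neighborSet u = {v, w} := by
        ext y
        simp only [hT, neighborSet_sup', Set.mem_union, mem_neighborSet, pairG,
          Set.mem_insert_iff, Set.mem_singleton_iff]
        constructor
        · rintro ((⟨h1, h2⟩ | ⟨h1, h2⟩) | ⟨h1, h2⟩) <;> rcases h2 with ⟨he1, he2⟩ | ⟨he1, he2⟩ <;>
            subst he2 <;> simp_all
        · rintro (rfl | rfl) <;> simp [hvu', hvw', huw, hvu'.symm, hvw'.symm, huw.symm]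
      have hTw : T.neighborSet w = {v, u} := by
        ext y
        simp only [hT, neighborSet_sup', Set.mem_union, mem_neighborSet, pairG,
          Set.mem_insert_iff, Set.mem_singleton_iff]
        constructor
        · rintro ((⟨h1, h2⟩ | ⟨h1, h2⟩) | ⟨h1, h2⟩) <;> rcases h2 with ⟨he1, he2⟩ | ⟨he1, he2⟩ <;>
            subst he2 <;> simp_all
        · rintro (rfl | rfl) <;> simp [hvu', hvw', huw, hvu'.symm, hvw'.symm, huw.symm]
      have hTx : ∀ x, x ≠ v → x ≠ u → x ≠ w → T.neighborSet x = ∅ := by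
        intro x h1 h2 h3
        ext y
        simp only [hT, neighborSet_sup', Set.mem_union, mem_neighborSet, Set.mem_empty_iff_false,
          iff_false]
        simp only [pairG]
        rintro ((⟨ha, h2⟩ | ⟨ha, h2⟩) | ⟨ha, h2⟩) <;> rcases h2 with ⟨he1, he2⟩ | ⟨he1, he2⟩ <;>
          simp_all
      have hTeven : ∀ x, Even (edeg T x) := by
        intro x
        by_cases h1 : x = v
        · subst h1; unfold edeg; rw [hTv, Set.ncard_pair huw]; exact ⟨1, rfl⟩
        by_cases h2 : x = u
        · subst h2; unfold edeg; rw [hTu, Set.ncard_pair hvw']; exact ⟨1, rfl⟩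
        by_cases h3 : x = w
        · subst h3; unfold edeg; rw [hTw, Set.ncard_pair hvu']; exact ⟨1, rfl⟩
        · unfold edeg; rw [hTx x h1 h2 h3]; simp
      set H' := symmDiff H T with hH'
      have hH'G : H' ≤ G := (symmDiff_le_sup (a := H) (b := T)).trans (sup_le hHG hTG)
      have hpar' : ∀ x, Odd (edeg H' x) ↔ x ∈ X := by
        intro x
        rw [← hpar x]
        have h1 := edeg_symmDiff_parity H T x
        rw [← hH'] at h1
        have h2 := (hTeven x)
        rw [Nat.even_iff] at h2
        rw [Nat.odd_iff, Nat.odd_iff]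
        omega
      -- v, u, w are not isolated in H'
      have hNv' : H'.neighborSet v = {u, w} := by
        rw [hH', neighborSet_symmDiff, hNv, hTv]
        simp [symmDiff_def]
      have hvmem : ∀ x, x = u ∨ x = w → v ∈ H'.neighborSet x := by
        intro x hx
        rw [hH', neighborSet_symmDiff, Set.mem_symmDiff]
        right
        constructor
        · rcases hx with rfl | rfl
          · rw [hTu]; exact Or.inl rfl
          · rw [hTw]; exact Or.inl rfl
        · intro hmem
          have : x ∈ H.neighborSet v := (H.adj_symm hmem)
          rw [hNv] at this
          exact this
      have hpos : ∀ x, x = v ∨ x = u ∨ x = w → 1 ≤ edeg H' x := by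
        intro x hx
        have hne : (H'.neighborSet x).Nonempty := by
          rcases hx with rfl | rfl | rfl
          · rw [hNv']; exact ⟨u, Or.inl rfl⟩
          · exact ⟨v, hvmem _ (Or.inl rfl)⟩
          · exact ⟨v, hvmem _ (Or.inr rfl)⟩
        unfold edeg
        exact (Set.ncard_pos (Set.toFinite _)).mpr hne
      have hsame : ∀ x, x ≠ v → x ≠ u → x ≠ w → H'.neighborSet x = H.neighborSet x := by
        intro x h1 h2 h3
        rw [hH', neighborSet_symmDiff, hTx x h1 h2 h3]
        simp
      have hiso' : {x | edeg H' x = 0} ⊆ {x | edeg H x = 0} \ {v} := by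
        intro x hx
        simp only [Set.mem_setOf_eq] at hx
        have h1 : x ≠ v ∧ x ≠ u ∧ x ≠ w := by
          refine ⟨?_, ?_, ?_⟩ <;> rintro rfl <;>
            [exact absurd hx (by have := hpos x (Or.inl rfl); omega);
             exact absurd hx (by have := hpos x (Or.inr (Or.inl rfl)); omega);
             exact absurd hx (by have := hpos x (Or.inr (Or.inr rfl)); omega)]
        refine ⟨?_, ?_⟩
        · simp only [Set.mem_setOf_eq]
          rw [edeg, ← hsame x h1.1 h1.2.1 h1.2.2]
          exact hx
        · simp only [Set.mem_singleton_iff]; exact h1.1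
      have hcount : {x | edeg H' x = 0}.ncard ≤ m := by
        have h1 : ({x | edeg H x = 0} \ {v}).ncard = {x | edeg H x = 0}.ncard - 1 :=
          Set.ncard_diff_singleton_of_mem (s := {x | edeg H x = 0}) hv
        have h2 : 1 ≤ ({x | edeg H x = 0} : Set V).ncard := by
          exact (Set.ncard_pos (Set.toFinite _)).mpr ⟨v, hv⟩
        calc {x | edeg H' x = 0}.ncard ≤ ({x | edeg H x = 0} \ {v}).ncard :=
              Set.ncard_le_ncard hiso' (Set.toFinite _)
          _ ≤ m := by omega
      exact ih X H' hH'G hpar' hcount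

theorem star_free_min_degree_strong_parity {V : Type*} [Fintype V]
    (G : SimpleGraph V) (hG : G.Connected) (r : ℕ) (hr : 3 ≤ r)
    (hfree : IsEmpty (completeBipartiteGraph (Fin 1) (Fin r) ↪g G))
    (hδ : ∀ v, r ≤ edeg G v) :
    StrongParity G := by
  intro X hX
  obtain ⟨H, hHG, hpar⟩ := realz_of_even hG X hX
  obtain ⟨H', h1, h2, h3⟩ :=
    deisolate r hfree hδ ({v | edeg H v = 0}.ncard) X H hHG hpar le_rfl
  exact ⟨H', ⟨h1, h2⟩, h3⟩
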